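/- Monotonicity of the robustness lower bound under flowpipe refinement for the negation-free fragment: let ω and ω' be flowpipes such that at every time t the confidence interval of ω' is contained in that of ω. Then for every formula φ in the fragment {atomic, conjunction, always, eventually}, the lower bound of the robustness interval satisfies ρ̲(φ, ω, t) ≤ ρ̲(φ, ω', t), and the upper bound satisfies ρ̄(φ, ω', t) ≤ ρ̄(φ, ω, t). -/

import Mathlib

/-- STL-U formulas over the fragment {atomic, negation, conjunction, always, eventually},
with finite nonempty time windows given as finite sets of time offsets. -/
inductive STLU where
  | atom : (ℝ → ℝ) → STLU
  | not : STLU → STLU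
  | and : STLU → STLU → STLU
  | always : (I : Finset ℕ) → I.Nonempty → STLU → STLU
  | eventually : (I : Finset ℕ) → I.Nonempty → STLU → STLU

/-- A flowpipe assigns to each time a confidence interval, given by its pair of endpoints. -/
def Flowpipe := ℕ → ℝ × ℝ

/-- A flowpipe is valid if every confidence interval is nonempty (lower ≤ upper). -/
def Flowpipe.Valid (ω : Flowpipe) : Prop := ∀ t, (ω t).1 ≤ (ω t).2

/-- Strong and weak satisfaction of an STL-U formula by a flowpipe at a time,
returned as a pair (strong, weak). -/
def sat (ω : Flowpipe) : STLU → ℕ → Prop × Prop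
  | .atom f, t =>
      (∀ x ∈ Set.Icc (ω t).1 (ω t).2, f x > 0, ∃ x ∈ Set.Icc (ω t).1 (ω t).2, f x > 0)
  | .not φ, t => (¬ (sat ω φ t).2, ¬ (sat ω φ t).1)
  | .and φ ψ, t => ((sat ω φ t).1 ∧ (sat ω ψ t).1, (sat ω φ t).2 ∧ (sat ω ψ t).2)
  | .always I _ φ, t => (∀ d ∈ I, (sat ω φ (t + d)).1, ∀ d ∈ I, (sat ω φ (t + d)).2)
  | .eventually I _ φ, t => (∃ d ∈ I, (sat ω φ (t + d)).1, ∃ d ∈ I, (sat ω φ (t + d)).2)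

/-- The STL-U quantitative semantics: the robustness degree interval,
returned as its pair of endpoints (lower, upper). -/
noncomputable def rob (ω : Flowpipe) : STLU → ℕ → ℝ × ℝ
  | .atom f, t =>
      (sInf (f '' Set.Icc (ω t).1 (ω t).2), sSup (f '' Set.Icc (ω t).1 (ω t).2))
  | .not φ, t => (-(rob ω φ t).2, -(rob ω φ t).1)
  | .and φ ψ, t =>
      (min (rob ω φ t).1 (rob ω ψ t).1, min (rob ω φ t).2 (rob ω ψ t).2)
  | .always I h φ, t =>
      (I.inf' h fun d => (rob ω φ (t + d)).1, I.inf' h fun d => (rob ω φ (t + d)).2)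
  | .eventually I h φ, t =>
      (I.sup' h fun d => (rob ω φ (t + d)).1, I.sup' h fun d => (rob ω φ (t + d)).2)

/-- All atomic functions occurring in the formula are continuous. -/
def atomsContinuous : STLU → Prop
  | .atom f => Continuous f
  | .not φ => atomsContinuous φ
  | .and φ ψ => atomsContinuous φ ∧ atomsContinuous ψ
  | .always _ _ φ => atomsContinuous φ
  | .eventually _ _ φ => atomsContinuous φ

/-- The formula contains no negation. -/
def negFree : STLU → Prop
  | .atom _ => True
  | .not _ => False
  | .and φ ψ => negFree φ ∧ negFree ψ
  | .always _ _ φ => negFree φ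
  | .eventually _ _ φ => negFree φ

theorem robustness_monotone_refinement (φ : STLU) (hφn : negFree φ)
    (hφc : atomsContinuous φ) (ω ω' : Flowpipe)
    (hω : ω.Valid) (hω' : ω'.Valid)
    (hsub : ∀ t, Set.Icc (ω' t).1 (ω' t).2 ⊆ Set.Icc (ω t).1 (ω t).2)
    (t : ℕ) :
    (rob ω φ t).1 ≤ (rob ω' φ t).1 ∧ (rob ω' φ t).2 ≤ (rob ω φ t).2 := by
  induction φ generalizing t with
  | atom f =>
    simp only [rob]
    have hK : IsCompact (Set.Icc (ω t).1 (ω t).2) := isCompact_Icc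
    have hcf : Continuous f := hφc
    have hKim : IsCompact (f '' Set.Icc (ω t).1 (ω t).2) := hK.image hcf
    have hne' : (f '' Set.Icc (ω' t).1 (ω' t).2).Nonempty :=
      (Set.nonempty_Icc.mpr (hω' t)).image f
    have hsubim : f '' Set.Icc (ω' t).1 (ω' t).2 ⊆ f '' Set.Icc (ω t).1 (ω t).2 :=
      Set.image_mono (f := f) (hsub t)
    constructor
    · exact csInf_le_csInf hKim.bddBelow hne' hsubim
    · exact csSup_le_csSup hKim.bddAbove hne' hsubim
  | not φ ih => exact absurd hφn (by simp [negFree])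
  | and φ ψ ihφ ihψ =>
    obtain ⟨h1, h2⟩ := hφn
    obtain ⟨c1, c2⟩ := hφc
    have A := ihφ h1 c1 t; have B := ihψ h2 c2 t
    exact ⟨min_le_min A.1 B.1, min_le_min A.2 B.2⟩
  | always I hI φ ih =>
    simp only [rob]
    constructor
    · refine Finset.le_inf' hI _ fun d hd => ?_
      exact le_trans (Finset.inf'_le _ hd) ((ih hφn hφc (t + d)).1)
    · refine Finset.le_inf' hI _ fun d hd => ?_
      exact le_trans (Finset.inf'_le _ hd) ((ih hφn hφc (t + d)).2)
  | eventually I hI φ ih =>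
    simp only [rob]
    constructor
    · refine Finset.sup'_le hI _ fun d hd => ?_
      exact le_trans ((ih hφn hφc (t + d)).1) (Finset.le_sup' (fun d => (rob ω' φ (t + d)).1) hd)
    · refine Finset.sup'_le hI _ fun d hd => ?_
      exact le_trans ((ih hφn hφc (t + d)).2) (Finset.le_sup' (fun d => (rob ω φ (t + d)).2) hd)
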